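/- arXiv:2004.04719 — 4 statements merged into one kernel-verified Lean document; each statement's English description precedes it below -/
import Mathlib

section
/- For any Hurwitz matrix A ∈ ℝ^{d×d} (i.e., every eigenvalue of A has strictly positive real part), there exists an invertible matrix U ∈ ℂ^{d×d} and a matrix D ∈ ℂ^{d×d} such that A = U D U⁻¹ and D + Dᴴ ⪰ λ* I_d, where λ* = min_i Re(λ_i(A)) and Dᴴ denotes the conjugate transpose. -/
open Matrix
open scoped ComplexOrder

namespace Stmt0Aux


variable {n m : Type*} [Fintype n] [DecidableEq n] [Fintype m] [DecidableEq m]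

/-- The target property. -/
def Good (A : Matrix n n ℂ) (r : ℝ) : Prop :=
  ∃ U D : Matrix n n ℂ, IsUnit U ∧ A = U * D * U⁻¹ ∧
    (D + Dᴴ - (r : ℂ) • (1 : Matrix n n ℂ)).PosSemidef

lemma Good.conj {A P : Matrix n n ℂ} {r : ℝ}
    (hP : IsUnit P) (h : Good (P⁻¹ * A * P) r) : Good A r := by
  obtain ⟨U, D, hU, hEq, hPSD⟩ := h
  have hPd : IsUnit P.det := (isUnit_iff_isUnit_det P).mp hP
  refine ⟨P * U, D, hP.mul hU, ?_, hPSD⟩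
  have h1 : P * P⁻¹ = 1 := mul_nonsing_inv P hPd
  have h2 : P⁻¹ * P = 1 := nonsing_inv_mul P hPd
  calc A = P * (P⁻¹ * A * P) * P⁻¹ := by
        simp only [Matrix.mul_assoc, h1, Matrix.mul_one]
        rw [← Matrix.mul_assoc P P⁻¹, h1, Matrix.one_mul]
    _ = P * (U * D * U⁻¹) * P⁻¹ := by rw [hEq]
    _ = (P * U) * D * (P * U)⁻¹ := by
        rw [Matrix.mul_inv_rev]; simp only [Matrix.mul_assoc]

lemma Good.of_submatrix (e : m ≃ n) {A : Matrix n n ℂ} {r : ℝ}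
    (h : Good (A.submatrix e e) r) : Good A r := by
  obtain ⟨U, D, hU, hEq, hPSD⟩ := h
  refine ⟨U.submatrix e.symm e.symm, D.submatrix e.symm e.symm, ?_, ?_, ?_⟩
  · rw [isUnit_iff_isUnit_det, det_submatrix_equiv_self, ← isUnit_iff_isUnit_det]
    exact hU
  · have := congrArg (fun M => M.submatrix e.symm e.symm) hEq
    rw [Matrix.submatrix_submatrix] at this
    simp only [Equiv.self_comp_symm, Matrix.submatrix_id_id] at this
    rw [this, inv_submatrix_equiv, Matrix.submatrix_mul_equiv,
      Matrix.submatrix_mul_equiv]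
  · have := (posSemidef_submatrix_equiv (M := D + Dᴴ - (r : ℂ) • 1) e.symm).mpr hPSD
    convert this using 1
    simp [Matrix.submatrix_add, Matrix.submatrix_sub, Matrix.submatrix_smul,
      Matrix.conjTranspose_submatrix, Matrix.submatrix_one_equiv]

lemma mem_spectrum_iff_det {A : Matrix n n ℂ} {μ : ℂ} :
    μ ∈ spectrum ℂ A ↔ (μ • (1 : Matrix n n ℂ) - A).det = 0 := by
  rw [spectrum.mem_iff]
  have : algebraMap ℂ (Matrix n n ℂ) μ = μ • 1 := by
    rw [Algebra.algebraMap_eq_smul_one]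
  rw [this]
  constructor
  · intro h
    by_contra hne
    exact h ((isUnit_iff_isUnit_det _).mpr (isUnit_iff_ne_zero.mpr hne))
  · intro h hu
    exact isUnit_iff_ne_zero.mp ((isUnit_iff_isUnit_det _).mp hu) h

lemma spectrum_conj {A P : Matrix n n ℂ} (hP : IsUnit P) :
    spectrum ℂ (P⁻¹ * A * P) = spectrum ℂ A := by
  obtain ⟨u, rfl⟩ := hP
  rw [← Matrix.coe_units_inv u]
  exact spectrum.units_conjugate'

lemma spectrum_submatrix (e : m ≃ n) (A : Matrix n n ℂ) :
    spectrum ℂ (A.submatrix e e) = spectrum ℂ A := by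
  have : A.submatrix e e = Matrix.reindexAlgEquiv ℂ ℂ e.symm A := by
    simp [Matrix.reindexAlgEquiv_apply, Matrix.reindex_apply]
  rw [this, AlgEquiv.spectrum_eq]


lemma rowlem (u : Matrix Unit n ℂ) {s c : ℝ} (hc : 0 ≤ c)
    (h : c * ∑ j, Complex.normSq (u () j) ≤ s) :
    ((s : ℂ) • (1 : Matrix n n ℂ) - (c : ℂ) • (uᴴ * u)).PosSemidef := by
  rw [posSemidef_iff_dotProduct_mulVec]
  constructor
  · unfold Matrix.IsHermitian
    rw [conjTranspose_sub, conjTranspose_smul, conjTranspose_smul,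
      conjTranspose_one, conjTranspose_mul, conjTranspose_conjTranspose]
    simp
  · intro x
    have key : star x ⬝ᵥ ((s : ℂ) • (1 : Matrix n n ℂ) - (c : ℂ) • (uᴴ * u)) *ᵥ x
        = (s : ℂ) * (star x ⬝ᵥ x) - (c : ℂ) * (star (u *ᵥ x) ⬝ᵥ (u *ᵥ x)) := by
      rw [sub_mulVec, dotProduct_sub, smul_mulVec, one_mulVec, dotProduct_smul,
        smul_mulVec, dotProduct_smul, smul_eq_mul, smul_eq_mul]
      congr 1
      rw [← mulVec_mulVec, dotProduct_mulVec, vecMul_conjTranspose, star_star]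
    rw [key]
    have hx : star x ⬝ᵥ x = ((∑ j, Complex.normSq (x j) : ℝ) : ℂ) := by
      simp [dotProduct, Complex.normSq_eq_conj_mul_self]
    have hS : star (u *ᵥ x) ⬝ᵥ (u *ᵥ x) = ((Complex.normSq ((u *ᵥ x) ()) : ℝ) : ℂ) := by
      simp [dotProduct, Complex.normSq_eq_conj_mul_self]
    rw [hx, hS, ← Complex.ofReal_mul, ← Complex.ofReal_mul, ← Complex.ofReal_sub]
    rw [Complex.zero_le_real]
    -- Cauchy-Schwarz
    have cs : Complex.normSq ((u *ᵥ x) ()) ≤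
        (∑ j, Complex.normSq (u () j)) * (∑ j, Complex.normSq (x j)) := by
      have h1 : ‖(u *ᵥ x) ()‖ ≤ ∑ j, ‖u () j‖ * ‖x j‖ := by
        refine (norm_sum_le _ _).trans_eq ?_
        exact Finset.sum_congr rfl fun j _ => norm_mul _ _
      have h2 : (∑ j, ‖u () j‖ * ‖x j‖) ^ 2 ≤
          (∑ j, ‖u () j‖ ^ 2) * ∑ j, ‖x j‖ ^ 2 :=
        Finset.sum_mul_sq_le_sq_mul_sq _ _ _
      have h3 : Complex.normSq ((u *ᵥ x) ()) = ‖(u *ᵥ x) ()‖ ^ 2 := by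
        rw [← Complex.sq_norm]
      calc Complex.normSq ((u *ᵥ x) ()) = ‖(u *ᵥ x) ()‖ ^ 2 := h3
        _ ≤ (∑ j, ‖u () j‖ * ‖x j‖) ^ 2 := by
            apply pow_le_pow_left₀ (norm_nonneg _) h1
        _ ≤ (∑ j, ‖u () j‖ ^ 2) * ∑ j, ‖x j‖ ^ 2 := h2
        _ = (∑ j, Complex.normSq (u () j)) * (∑ j, Complex.normSq (x j)) := by
            congr 1 <;> refine Finset.sum_congr rfl fun j _ => ?_ <;>
              rw [← Complex.sq_norm]
    have hxnn : 0 ≤ ∑ j, Complex.normSq (x j) :=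
      Finset.sum_nonneg fun j _ => Complex.normSq_nonneg _
    have hunn : 0 ≤ ∑ j, Complex.normSq (u () j) :=
      Finset.sum_nonneg fun j _ => Complex.normSq_nonneg _
    nlinarith [Complex.normSq_nonneg ((u *ᵥ x) ())]


-- 1x1 matrix of a positive real is PosDef
lemma onelem {a : ℝ} (ha : 0 < a) :
    (Matrix.of fun (_ _ : Unit) => (a : ℂ)).PosDef := by
  rw [posDef_iff_dotProduct_mulVec]
  constructor
  · ext i j
    simp [conjTranspose_apply]
  · intro x hx
    have hx0 : x () ≠ 0 := by
      intro h0; apply hx; funext i; cases i; exact h0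
    have : star x ⬝ᵥ (Matrix.of fun (_ _ : Unit) => (a : ℂ)) *ᵥ x
        = ((a * Complex.normSq (x ()) : ℝ) : ℂ) := by
      simp [dotProduct, mulVec, Complex.normSq_eq_conj_mul_self]
      ring
    rw [this, Complex.zero_lt_real]
    exact mul_pos ha (Complex.normSq_pos.mpr hx0)

lemma onelem_inv (a : ℝ) (ha : a ≠ 0) :
    (Matrix.of fun (_ _ : Unit) => (a : ℂ))⁻¹
      = Matrix.of fun (_ _ : Unit) => ((a : ℂ))⁻¹ := by
  apply inv_eq_right_inv
  ext i j
  simp [mul_apply, one_apply]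
  rw [mul_inv_cancel₀ (by exact_mod_cast ha)]

lemma good_fromBlocks (X : Matrix n n ℂ) (w : Matrix Unit n ℂ) (μ : ℂ) {c r : ℝ}
    (hc : 0 < c) (hr : r < 2 * c) (hμ : c ≤ μ.re)
    (hGoodX : Good X ((r + 2 * c) / 2)) :
    Good (fromBlocks X 0 w (Matrix.of fun _ _ => μ) ) r := by
  obtain ⟨V, D', hV, hXeq, hPSD⟩ := hGoodX
  set r' : ℝ := (r + 2 * c) / 2 with hr'
  have hδ : 0 < r' - r := by simp [hr']; linarith
  set u : Matrix Unit n ℂ := w * V with hu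
  set t : ℝ := ∑ j, Complex.normSq (u () j) with ht
  have htnn : 0 ≤ t := Finset.sum_nonneg fun j _ => Complex.normSq_nonneg _
  set a : ℝ := 2 * μ.re - r with ha
  have ha0 : 0 < a := by simp [ha]; linarith
  set c' : ℝ := (r' - r) / (t + 1) with hc'
  have hc'0 : 0 < c' := div_pos hδ (by linarith)
  set ε : ℝ := Real.sqrt (a * c') with hε
  have hε0 : 0 < ε := Real.sqrt_pos.mpr (mul_pos ha0 hc'0)
  have hε2 : ε ^ 2 = a * c' := Real.sq_sqrt (le_of_lt (mul_pos ha0 hc'0))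
  -- the matrices
  set Dfin : Matrix (n ⊕ Unit) (n ⊕ Unit) ℂ :=
    fromBlocks D' 0 ((ε : ℂ) • u) (Matrix.of fun _ _ => μ) with hDfin
  set U : Matrix (n ⊕ Unit) (n ⊕ Unit) ℂ :=
    fromBlocks V 0 0 (Matrix.of fun _ _ => ((ε : ℂ))⁻¹) with hU
  have hVdet : IsUnit V.det := (isUnit_iff_isUnit_det V).mp hV
  have hUunit : IsUnit U := by
    rw [isUnit_iff_isUnit_det, hU, det_fromBlocks_zero₁₂]
    refine hVdet.mul ?_
    rw [det_unique]
    simp only [of_apply]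
    exact isUnit_iff_ne_zero.mpr (by
      simpa using (inv_ne_zero (by exact_mod_cast hε0.ne' : (ε : ℂ) ≠ 0)))
  refine ⟨U, Dfin, hUunit, ?_, ?_⟩
  · -- similarity
    have key : fromBlocks X 0 w (Matrix.of fun _ _ => μ) * U = U * Dfin := by
      rw [hU, hDfin, fromBlocks_multiply, fromBlocks_multiply, fromBlocks_inj]
      refine ⟨?_, ?_, ?_, ?_⟩
      · simp [hXeq, Matrix.mul_assoc, nonsing_inv_mul V hVdet]
      · simp
      · rw [Matrix.zero_mul, Matrix.mul_zero, add_zero, zero_add, ← hu]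
        ext i j
        simp [mul_apply, Matrix.smul_apply]
        rw [← mul_assoc, inv_mul_cancel₀ (by exact_mod_cast hε0.ne'), one_mul]
      · ext i j
        simp [mul_apply, mul_comm]
    have hUU : U * U⁻¹ = 1 := mul_nonsing_inv U ((isUnit_iff_isUnit_det U).mp hUunit)
    calc fromBlocks X 0 w (Matrix.of fun _ _ => μ)
        = fromBlocks X 0 w (Matrix.of fun _ _ => μ) * (U * U⁻¹) := by rw [hUU, Matrix.mul_one]
      _ = (fromBlocks X 0 w (Matrix.of fun _ _ => μ) * U) * U⁻¹ := by rw [Matrix.mul_assoc]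
      _ = U * Dfin * U⁻¹ := by rw [key]
  · -- positive semidefiniteness
    have hM : Dfin + Dfinᴴ - (r : ℂ) • (1 : Matrix (n ⊕ Unit) (n ⊕ Unit) ℂ)
        = fromBlocks (D' + D'ᴴ - (r : ℂ) • 1) (((ε : ℂ) • u)ᴴ) ((ε : ℂ) • u)
            (Matrix.of fun _ _ => ((a : ℝ) : ℂ)) := by
      rw [hDfin, fromBlocks_conjTranspose, ← fromBlocks_one, fromBlocks_smul,
        fromBlocks_add]
      rw [sub_eq_add_neg, fromBlocks_neg, fromBlocks_add, fromBlocks_inj]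
      refine ⟨by abel, by simp, by simp, ?_⟩
      ext i j
      simp only [Matrix.add_apply, Matrix.neg_apply, of_apply, conjTranspose_apply,
        Matrix.smul_apply, one_apply_eq, smul_eq_mul, mul_one]
      rw [RCLike.star_def, Complex.add_conj, ha]
      push_cast
      ring
    rw [hM]
    have hD2 : (Matrix.of fun (_ _ : Unit) => ((a : ℝ) : ℂ)).PosDef := onelem ha0
    have : Invertible (Matrix.of fun (_ _ : Unit) => ((a : ℝ) : ℂ)) := by
      apply Matrix.invertibleOfIsUnitDet
      rw [det_unique]
      simp only [of_apply]
      exact isUnit_iff_ne_zero.mpr (by exact_mod_cast ha0.ne')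
    have hconv : ((((ε : ℂ) • u)ᴴ) * (Matrix.of fun (_ _ : Unit) => ((a : ℝ) : ℂ))⁻¹ *
          ((ε : ℂ) • u)) = ((c' : ℂ)) • (uᴴ * u) := by
      rw [onelem_inv a ha0.ne', conjTranspose_smul]
      have hsm : (Matrix.of fun (_ _ : Unit) => ((a : ℂ))⁻¹)
          = ((a : ℂ))⁻¹ • (1 : Matrix Unit Unit ℂ) := by
        ext i j; cases i; cases j; simp [one_apply]
      rw [hsm]
      simp only [Matrix.smul_mul, Matrix.mul_smul, Matrix.mul_one, smul_smul]
      congr 1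
      rw [RCLike.star_def, Complex.conj_ofReal]
      have h1 : ((ε : ℂ)) * (((a : ℂ))⁻¹ * (ε : ℂ)) = ((ε ^ 2 / a : ℝ) : ℂ) := by
        push_cast; ring
      have h2 : ε ^ 2 / a = c' := by
        rw [hε2]; field_simp
      rw [h1, h2]
    have hiff := PosDef.fromBlocks₂₂ (D' + D'ᴴ - (r : ℂ) • 1) (((ε : ℂ) • u)ᴴ)
      hD2
    rw [conjTranspose_conjTranspose] at hiff
    rw [hiff, hconv]
    have hsplit : (D' + D'ᴴ - (r : ℂ) • 1) - (c' : ℂ) • (uᴴ * u)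
        = (D' + D'ᴴ - (r' : ℂ) • 1) +
          ((((r' - r : ℝ)) : ℂ) • (1 : Matrix n n ℂ) - (c' : ℂ) • (uᴴ * u)) := by
      have hcast : ((r' - r : ℝ) : ℂ) • (1 : Matrix n n ℂ)
          = (r' : ℂ) • 1 - (r : ℂ) • 1 := by
        push_cast; rw [sub_smul]
      rw [hcast]
      abel
    rw [hsplit]
    refine hPSD.add (rowlem u hc'0.le ?_)
    rw [← ht, hc']
    rw [div_mul_eq_mul_div, div_le_iff₀ (by linarith)]
    nlinarith


lemma good_aux : ∀ (d : ℕ) (A : Matrix (Fin d) (Fin d) ℂ) (c r : ℝ), 0 < c → r < 2 * c →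
    (∀ μ ∈ spectrum ℂ A, c ≤ μ.re) → Good A r := by
  intro d
  induction d with
  | zero =>
    intro A c r _ _ _
    refine ⟨1, A, isUnit_one, by simp, ?_, ?_⟩
    · ext i j
      exact i.elim0
    · intro x
      simp [dotProduct, Subsingleton.elim x 0]
  | succ d IH =>
    intro A c r hc hr hspec
    obtain ⟨μ, hμ⟩ : (spectrum ℂ A).Nonempty :=
      spectrum.nonempty_of_isAlgClosed_of_finiteDimensional ℂ A
    have hdet : (μ • (1 : Matrix (Fin (d+1)) (Fin (d+1)) ℂ) - A).det = 0 :=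
      mem_spectrum_iff_det.mp hμ
    obtain ⟨v, hv0, hv⟩ := (Matrix.exists_mulVec_eq_zero_iff).mpr hdet
    have hAv : A *ᵥ v = μ • v := by
      rw [sub_mulVec, sub_eq_zero, smul_mulVec, one_mulVec] at hv
      exact hv.symm
    obtain ⟨i₀, hi₀⟩ : ∃ i, v i ≠ 0 := Function.ne_iff.mp hv0
    set P : Matrix (Fin (d+1)) (Fin (d+1)) ℂ :=
      (1 : Matrix (Fin (d+1)) (Fin (d+1)) ℂ).updateCol i₀ v with hPdef
    have hPdet : P.det = v i₀ := by
      rw [hPdef, ← cramer_apply, cramer_one]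
      rfl
    have hP : IsUnit P := by
      rw [isUnit_iff_isUnit_det, hPdet]
      exact isUnit_iff_ne_zero.mpr hi₀
    have hPdetu : IsUnit P.det := (isUnit_iff_isUnit_det P).mp hP
    set C : Matrix (Fin (d+1)) (Fin (d+1)) ℂ := P⁻¹ * A * P with hCdef
    -- the column fact
    have hPv : P *ᵥ Pi.single i₀ 1 = v := by
      rw [mulVec_single]
      funext i
      rw [Pi.smul_apply, MulOpposite.op_one, one_smul, col_apply, hPdef, updateCol_self]
    have hCcol : C *ᵥ Pi.single i₀ (1 : ℂ)
        = μ • (Pi.single i₀ (1 : ℂ) : Fin (d+1) → ℂ) := by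
      have h1 : C *ᵥ Pi.single i₀ (1 : ℂ) = P⁻¹ *ᵥ (A *ᵥ (P *ᵥ Pi.single i₀ (1 : ℂ))) := by
        rw [hCdef, ← mulVec_mulVec, ← mulVec_mulVec]
      rw [h1, hPv, hAv, mulVec_smul]
      congr 1
      rw [← hPv, mulVec_mulVec, nonsing_inv_mul P hPdetu, one_mulVec]
    have hCent : ∀ i, C i i₀ = if i = i₀ then μ else 0 := by
      intro i
      have h2 := congrFun hCcol i
      simp only [mulVec_single, mul_one, Pi.smul_apply, Pi.single_apply, smul_eq_mul,
        MulOpposite.op_one, one_smul, col_apply] at h2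
      rw [h2]
      by_cases h : i = i₀ <;> simp [h]
    -- reindex
    set e : Fin (d+1) ≃ (Fin d ⊕ Unit) :=
      (finSuccEquiv' i₀).trans (Equiv.optionEquivSumPUnit (Fin d)) with hedef
    have hei₀ : e i₀ = Sum.inr () := by
      rw [hedef]
      simp [finSuccEquiv'_at]
    have hesymm : e.symm (Sum.inr ()) = i₀ := by
      rw [← hei₀, Equiv.symm_apply_apply]
    set B' : Matrix (Fin d ⊕ Unit) (Fin d ⊕ Unit) ℂ := C.submatrix e.symm e.symm with hB'def
    set X : Matrix (Fin d) (Fin d) ℂ := B'.toBlocks₁₁ with hXdef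
    set w : Matrix Unit (Fin d) ℂ := B'.toBlocks₂₁ with hwdef
    have hne : ∀ j : Fin d, e.symm (Sum.inl j) ≠ i₀ := by
      intro j h
      have := congrArg e h
      rw [Equiv.apply_symm_apply, hei₀] at this
      exact Sum.inl_ne_inr this
    have hB'eq : B' = fromBlocks X 0 w (Matrix.of fun _ _ => μ) := by
      ext i j
      rcases i with i | i <;> rcases j with j | j
      · rfl
      · cases j
        show C (e.symm (Sum.inl i)) (e.symm (Sum.inr ())) = 0
        rw [hesymm, hCent, if_neg (hne i)]
      · rfl
      · cases i; cases j
        show C (e.symm (Sum.inr ())) (e.symm (Sum.inr ())) = μ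
        rw [hesymm, hCent, if_pos rfl]
    -- spectrum of X
    have hspecX : ∀ ν ∈ spectrum ℂ X, c ≤ ν.re := by
      intro ν hν
      have hdX : (ν • (1 : Matrix (Fin d) (Fin d) ℂ) - X).det = 0 := mem_spectrum_iff_det.mp hν
      have hsub : ν • (1 : Matrix (Fin d ⊕ Unit) (Fin d ⊕ Unit) ℂ) - B'
          = fromBlocks (ν • 1 - X) 0 (-w) (ν • 1 - Matrix.of fun _ _ => μ) := by
        rw [hB'eq, ← fromBlocks_one, fromBlocks_smul, sub_eq_add_neg, fromBlocks_neg,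
          fromBlocks_add]
        congr 1 <;> simp [sub_eq_add_neg]
      have : ν ∈ spectrum ℂ B' := by
        rw [mem_spectrum_iff_det, hsub, det_fromBlocks_zero₁₂, hdX, zero_mul]
      rw [hB'def, spectrum_submatrix, hCdef, spectrum_conj hP] at this
      exact hspec ν this
    have hμre : c ≤ μ.re := hspec μ hμ
    have hGX : Good X ((r + 2 * c) / 2) := IH X c _ hc (by linarith) hspecX
    have hGB' : Good B' r := by
      rw [hB'eq]
      exact good_fromBlocks X w μ hc hr hμre hGX
    have hGC : Good C r := Good.of_submatrix e.symm (by rw [← hB'def]; exact hGB')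
    exact Good.conj hP hGC


end Stmt0Aux

open Stmt0Aux

/-- For any Hurwitz matrix `A`, there exist an invertible `U` and a matrix `D` over `ℂ`
with `A = U D U⁻¹` and `D + Dᴴ ⪰ λ* I`, where `λ*` is the minimal real part of the
eigenvalues of `A`. -/
theorem stmt0 {d : ℕ} (A : Matrix (Fin d) (Fin d) ℝ) (lamStar : ℝ)
    (hmem : ∃ μ ∈ spectrum ℂ (A.map (algebraMap ℝ ℂ)), μ.re = lamStar)
    (hmin : ∀ μ ∈ spectrum ℂ (A.map (algebraMap ℝ ℂ)), lamStar ≤ μ.re)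
    (hHurwitz : ∀ μ ∈ spectrum ℂ (A.map (algebraMap ℝ ℂ)), 0 < μ.re) :
    ∃ U D : Matrix (Fin d) (Fin d) ℂ, IsUnit U ∧
      A.map (algebraMap ℝ ℂ) = U * D * U⁻¹ ∧
      (D + Dᴴ - (lamStar : ℂ) • (1 : Matrix (Fin d) (Fin d) ℂ)).PosSemidef := by
  obtain ⟨μ₀, hμ₀mem, hμ₀re⟩ := hmem
  have hpos : 0 < lamStar := hμ₀re ▸ hHurwitz μ₀ hμ₀mem
  exact good_aux d (A.map (algebraMap ℝ ℂ)) lamStar lamStar hpos (by linarith) hmin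
end

section
/- For all real A > 0, z > −A, and α ∈ (0, 1), it holds that (A + z)^{1+α} ≤ A^{1+α} + (1+α) A^α z + |z|^{1+α}. -/
/-- Real subadditivity of `x ↦ x^α` for `0 ≤ α ≤ 1` on nonnegative reals. -/
lemma rpow_subadd {x y α : ℝ} (hx : 0 ≤ x) (hy : 0 ≤ y) (h0 : 0 ≤ α) (h1 : α ≤ 1) :
    (x + y) ^ α ≤ x ^ α + y ^ α := by
  have := NNReal.rpow_add_le_add_rpow x.toNNReal y.toNNReal h0 h1
  have hxy : 0 ≤ x + y := add_nonneg hx hy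
  rw [← NNReal.coe_le_coe] at this
  push_cast at this
  rwa [Real.coe_toNNReal x hx, Real.coe_toNNReal y hy] at this

/-- For `A > 0`, `z > -A` and `α ∈ (0,1)`:
`(A + z)^{1+α} ≤ A^{1+α} + (1+α) A^α z + |z|^{1+α}`. -/
theorem stmt3 (A z α : ℝ) (hA : 0 < A) (hz : -A < z) (hα : α ∈ Set.Ioo (0 : ℝ) 1) :
    (A + z) ^ (1 + α) ≤ A ^ (1 + α) + (1 + α) * A ^ α * z + |z| ^ (1 + α) := by
  obtain ⟨hα0, hα1⟩ := hα
  set p : ℝ := 1 + α with hp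
  have hp1 : (1 : ℝ) ≤ p := by linarith
  have hps : p - 1 = α := by ring
  rcases le_or_gt 0 z with hz0 | hz0
  · -- z ≥ 0 case
    rw [abs_of_nonneg hz0]
    set g : ℝ → ℝ := fun t => A ^ p + p * A ^ α * t + t ^ p - (A + t) ^ p with hg
    have hderiv : ∀ t : ℝ, HasDerivAt g
        (p * A ^ α + p * t ^ (p - 1) - p * (A + t) ^ (p - 1)) t := by
      intro t
      have h1 : HasDerivAt (fun t : ℝ => t ^ p) (p * t ^ (p - 1)) t := by
        simpa [mul_comm] using Real.hasDerivAt_rpow_const (x := t) (p := p) (Or.inr hp1)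
      have h2 : HasDerivAt (fun t : ℝ => (A + t) ^ p) (p * (A + t) ^ (p - 1)) t := by
        have := (Real.hasDerivAt_rpow_const (x := A + t) (p := p) (Or.inr hp1)).comp t
          ((hasDerivAt_const t A).add (hasDerivAt_id t))
        simpa [mul_comm, Function.comp_def] using this
      have h3 : HasDerivAt (fun t : ℝ => A ^ p + p * A ^ α * t) (p * A ^ α) t := by
        simpa using ((hasDerivAt_id t).const_mul (p * A ^ α)).const_add (A ^ p)
      exact (h3.add h1).sub h2
    have hmono : MonotoneOn g (Set.Ici (0 : ℝ)) := by
      apply monotoneOn_of_deriv_nonneg (convex_Ici 0)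
      · exact fun t _ => ((hderiv t).continuousAt).continuousWithinAt
      · intro t ht
        exact ((hderiv t).differentiableAt).differentiableWithinAt
      · intro t ht
        rw [interior_Ici] at ht
        rw [(hderiv t).deriv, hps]
        have hsub : (A + t) ^ α ≤ A ^ α + t ^ α :=
          rpow_subadd hA.le (le_of_lt ht) hα0.le hα1.le
        nlinarith [hsub, hα0, mul_nonneg (by linarith : (0:ℝ) ≤ p) (sub_nonneg.mpr hsub)]
    have h0 : g 0 = 0 := by
      simp [hg, Real.zero_rpow (by positivity : p ≠ 0)]
    have := hmono (Set.self_mem_Ici) (Set.mem_Ici.mpr hz0) hz0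
    rw [h0] at this
    simp only [hg] at this
    linarith
  · -- z < 0 case
    rw [abs_of_neg hz0]
    set g : ℝ → ℝ := fun t => A ^ p + p * A ^ α * t + (-t) ^ p - (A + t) ^ p with hg
    have hderiv : ∀ t : ℝ, HasDerivAt g
        (p * A ^ α - p * (-t) ^ (p - 1) - p * (A + t) ^ (p - 1)) t := by
      intro t
      have h1 : HasDerivAt (fun t : ℝ => (-t) ^ p) (-(p * (-t) ^ (p - 1))) t := by
        have := (Real.hasDerivAt_rpow_const (x := -t) (p := p) (Or.inr hp1)).comp t
          (hasDerivAt_neg t)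
        simpa [mul_comm, Function.comp_def] using this
      have h2 : HasDerivAt (fun t : ℝ => (A + t) ^ p) (p * (A + t) ^ (p - 1)) t := by
        have := (Real.hasDerivAt_rpow_const (x := A + t) (p := p) (Or.inr hp1)).comp t
          ((hasDerivAt_const t A).add (hasDerivAt_id t))
        simpa [mul_comm, Function.comp_def] using this
      have h3 : HasDerivAt (fun t : ℝ => A ^ p + p * A ^ α * t) (p * A ^ α) t := by
        simpa using ((hasDerivAt_id t).const_mul (p * A ^ α)).const_add (A ^ p)
      have := (h3.add h1).sub h2
      exact this.congr_deriv (by ring)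
    have hanti : AntitoneOn g (Set.Icc z 0) := by
      apply antitoneOn_of_deriv_nonpos (convex_Icc z 0)
      · exact fun t _ => ((hderiv t).continuousAt).continuousWithinAt
      · intro t ht
        exact ((hderiv t).differentiableAt).differentiableWithinAt
      · intro t ht
        rw [interior_Icc] at ht
        obtain ⟨htl, htr⟩ := ht
        rw [(hderiv t).deriv, hps]
        have hmt : (0 : ℝ) ≤ -t := by linarith
        have hAt : (0 : ℝ) ≤ A + t := by linarith
        have hsub : A ^ α ≤ (-t) ^ α + (A + t) ^ α := by
          have := rpow_subadd hmt hAt hα0.le hα1.le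
          have hA' : -t + (A + t) = A := by ring
          rwa [hA'] at this
        nlinarith [hsub, hα0, mul_nonneg (by linarith : (0:ℝ) ≤ p) (sub_nonneg.mpr hsub)]
    have h0 : g 0 = 0 := by
      simp [hg, Real.zero_rpow (by positivity : p ≠ 0)]
    have := hanti (Set.mem_Icc.mpr ⟨le_refl z, hz0.le⟩) (Set.mem_Icc.mpr ⟨hz0.le, le_refl 0⟩) hz0.le
    rw [h0] at this
    simp only [hg] at this
    linarith
end

section
/- Let X, X⁺ be ℝ^d-valued random vectors with the same marginal law, let φ be measurable with E‖φ(X)‖² < ∞, and let γ ∈ (0,1). If M := E[φ(X)φ(X)ᵀ] is positive definite, then the matrix Ā := M − γE[φ(X)φ(X⁺)ᵀ] satisfies vᵀĀv ≥ (1 − γ) vᵀMv > 0 for all nonzero v ∈ ℝ^d, and hence min_i Re(λ_i(Ā)) ≥ (1−γ) λ_min(M) > 0. -/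
open Matrix MeasureTheory

/-- If `φ(X)` and `φ(X⁺)` have the same law with square-integrable components, and
`M = E[φ(X)φ(X)ᵀ]` is positive definite, then `Ā = M - γ E[φ(X)φ(X⁺)ᵀ]` satisfies
`vᵀĀv ≥ (1-γ) vᵀMv > 0` for every nonzero `v`, and every (complex) eigenvalue of `Ā`
has real part at least `(1-γ)·λ_min(M)`. -/
theorem stmt9 {d : ℕ} {Ω : Type*} [MeasurableSpace Ω] (μ : Measure Ω)
    [IsProbabilityMeasure μ]
    (φX φXp : Ω → Fin d → ℝ) (hmX : Measurable φX) (hmXp : Measurable φXp)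
    (hlaw : Measure.map φX μ = Measure.map φXp μ)
    (hL2 : Integrable (fun ω => ∑ i, (φX ω i) ^ 2) μ)
    (hint : ∀ i j, Integrable (fun ω => φX ω i * φX ω j) μ)
    (hint' : ∀ i j, Integrable (fun ω => φX ω i * φXp ω j) μ)
    (γ : ℝ) (hγ : γ ∈ Set.Ioo (0 : ℝ) 1)
    (M Abar : Matrix (Fin d) (Fin d) ℝ)
    (hM : ∀ i j, M i j = ∫ ω, φX ω i * φX ω j ∂μ)
    (hAbar : ∀ i j, Abar i j = M i j - γ * ∫ ω, φX ω i * φXp ω j ∂μ)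
    (hMpd : M.PosDef) :
    (∀ v : Fin d → ℝ, v ≠ 0 →
        (1 - γ) * (v ⬝ᵥ M.mulVec v) ≤ v ⬝ᵥ Abar.mulVec v ∧ 0 < v ⬝ᵥ M.mulVec v) ∧
      ∀ c : ℝ, (∀ v : Fin d → ℝ, (∑ i, (v i) ^ 2) = 1 → c ≤ v ⬝ᵥ M.mulVec v) →
        ∀ ν ∈ spectrum ℂ (Abar.map (algebraMap ℝ ℂ)), (1 - γ) * c ≤ ν.re := by
  obtain ⟨hγ0, hγ1⟩ := hγ
  -- f, g notation
  set F : (Fin d → ℝ) → Ω → ℝ := fun v ω => ∑ i, v i * φX ω i with hF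
  set G : (Fin d → ℝ) → Ω → ℝ := fun v ω => ∑ i, v i * φXp ω i with hG
  -- integrability
  have hintF2 : ∀ v, Integrable (fun ω => F v ω * F v ω) μ := by
    intro v
    have : (fun ω => F v ω * F v ω)
        = fun ω => ∑ i, ∑ j, (v i * v j) * (φX ω i * φX ω j) := by
      funext ω
      simp only [hF, Finset.sum_mul_sum]
      exact Finset.sum_congr rfl fun i _ => Finset.sum_congr rfl fun j _ => by ring
    rw [this]
    exact integrable_finset_sum _ fun i _ =>
      integrable_finset_sum _ fun j _ => (hint i j).const_mul _
  have hintFG : ∀ v, Integrable (fun ω => F v ω * G v ω) μ := by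
    intro v
    have : (fun ω => F v ω * G v ω)
        = fun ω => ∑ i, ∑ j, (v i * v j) * (φX ω i * φXp ω j) := by
      funext ω
      simp only [hF, hG, Finset.sum_mul_sum]
      exact Finset.sum_congr rfl fun i _ => Finset.sum_congr rfl fun j _ => by ring
    rw [this]
    exact integrable_finset_sum _ fun i _ =>
      integrable_finset_sum _ fun j _ => (hint' i j).const_mul _
  -- the map x ↦ (∑ v i * x i)^2
  have hmeas : ∀ v : Fin d → ℝ, Measurable (fun x : Fin d → ℝ => (∑ i, v i * x i) ^ 2) := by
    intro v
    exact ((Finset.measurable_sum _ fun i _ =>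
      by fun_prop).pow_const 2)
  -- equality of second moments of F and G
  have hsame : ∀ v, ∫ ω, G v ω * G v ω ∂μ = ∫ ω, F v ω * F v ω ∂μ := by
    intro v
    have h1 : ∫ ω, G v ω * G v ω ∂μ
        = ∫ x, (∑ i, v i * x i) ^ 2 ∂(Measure.map φXp μ) := by
      rw [integral_map hmXp.aemeasurable ((hmeas v).aestronglyMeasurable)]
      simp [hG, sq]
    have h2 : ∫ ω, F v ω * F v ω ∂μ
        = ∫ x, (∑ i, v i * x i) ^ 2 ∂(Measure.map φX μ) := by
      rw [integral_map hmX.aemeasurable ((hmeas v).aestronglyMeasurable)]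
      simp [hF, sq]
    rw [h1, h2, hlaw]
  have hintG2 : ∀ v, Integrable (fun ω => G v ω * G v ω) μ := by
    intro v
    have h1 : Integrable (fun x : Fin d → ℝ => (∑ i, v i * x i) ^ 2) (Measure.map φXp μ) := by
      rw [← hlaw]
      rw [integrable_map_measure ((hmeas v).aestronglyMeasurable) hmX.aemeasurable]
      simpa [hF, sq, Function.comp_def] using hintF2 v
    have := (integrable_map_measure ((hmeas v).aestronglyMeasurable)
      hmXp.aemeasurable).mp h1
    simpa [hG, sq, Function.comp_def] using this
  -- quadratic form identities
  have hMv : ∀ v : Fin d → ℝ, v ⬝ᵥ M.mulVec v = ∫ ω, F v ω * F v ω ∂μ := by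
    intro v
    have : (fun ω => F v ω * F v ω)
        = fun ω => ∑ i, ∑ j, (v i * v j) * (φX ω i * φX ω j) := by
      funext ω
      simp only [hF, Finset.sum_mul_sum]
      exact Finset.sum_congr rfl fun i _ => Finset.sum_congr rfl fun j _ => by ring
    rw [this, integral_finset_sum _ (fun i _ =>
      integrable_finset_sum _ fun j _ => (hint i j).const_mul _)]
    simp only [dotProduct, mulVec, hM, Finset.mul_sum]
    refine Finset.sum_congr rfl fun i _ => ?_
    rw [integral_finset_sum _ (fun j _ => (hint i j).const_mul _)]
    refine Finset.sum_congr rfl fun j _ => ?_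
    rw [integral_const_mul]; ring
  have hBv : ∀ v : Fin d → ℝ, v ⬝ᵥ Abar.mulVec v
      = v ⬝ᵥ M.mulVec v - γ * ∫ ω, F v ω * G v ω ∂μ := by
    intro v
    have hexp : (fun ω => F v ω * G v ω)
        = fun ω => ∑ i, ∑ j, (v i * v j) * (φX ω i * φXp ω j) := by
      funext ω
      simp only [hF, hG, Finset.sum_mul_sum]
      exact Finset.sum_congr rfl fun i _ => Finset.sum_congr rfl fun j _ => by ring
    have hI : ∫ ω, F v ω * G v ω ∂μ
        = ∑ i, ∑ j, (v i * v j) * ∫ ω, φX ω i * φXp ω j ∂μ := by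
      rw [hexp, integral_finset_sum _ (fun i _ =>
        integrable_finset_sum _ fun j _ => (hint' i j).const_mul _)]
      refine Finset.sum_congr rfl fun i _ => ?_
      rw [integral_finset_sum _ (fun j _ => (hint' i j).const_mul _)]
      exact Finset.sum_congr rfl fun j _ => integral_const_mul _ _
    have e1 : v ⬝ᵥ Abar.mulVec v = ∑ i, ∑ j, v i * (Abar i j * v j) := by
      simp [dotProduct, mulVec, Finset.mul_sum]
    have e2 : v ⬝ᵥ M.mulVec v = ∑ i, ∑ j, v i * (M i j * v j) := by
      simp [dotProduct, mulVec, Finset.mul_sum]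
    rw [e1, e2, hI, Finset.mul_sum, ← Finset.sum_sub_distrib]
    refine Finset.sum_congr rfl fun i _ => ?_
    rw [Finset.mul_sum, ← Finset.sum_sub_distrib]
    refine Finset.sum_congr rfl fun j _ => ?_
    rw [hAbar]; ring
  -- key inequality : ∫ F G ≤ ∫ F F
  have hkey : ∀ v : Fin d → ℝ, ∫ ω, F v ω * G v ω ∂μ ≤ v ⬝ᵥ M.mulVec v := by
    intro v
    have hle : ∫ ω, F v ω * G v ω ∂μ
        ≤ ∫ ω, (F v ω * F v ω + G v ω * G v ω) / 2 ∂μ := by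
      refine integral_mono (hintFG v) (((hintF2 v).add (hintG2 v)).div_const 2) ?_
      intro ω
      have := sq_nonneg (F v ω - G v ω)
      simp only
      nlinarith
    have : ∫ ω, (F v ω * F v ω + G v ω * G v ω) / 2 ∂μ = ∫ ω, F v ω * F v ω ∂μ := by
      rw [integral_div, integral_add (hintF2 v) (hintG2 v), hsame]
      ring
    rw [hMv]
    linarith [hle, this]
  -- the main quadratic form inequality, for all v
  have hmain : ∀ v : Fin d → ℝ, (1 - γ) * (v ⬝ᵥ M.mulVec v) ≤ v ⬝ᵥ Abar.mulVec v := by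
    intro v
    rw [hBv v]
    have := mul_le_mul_of_nonneg_left (hkey v) (le_of_lt hγ0)
    linarith
  refine ⟨fun v hv => ⟨hmain v, hMpd.dotProduct_mulVec_pos hv⟩, ?_⟩
  -- eigenvalue part
  intro c hc ν hν
  -- c-scaled lower bound
  have hcv : ∀ v : Fin d → ℝ, c * (∑ i, (v i) ^ 2) ≤ v ⬝ᵥ M.mulVec v := by
    intro v
    by_cases hv : v = 0
    · simp [hv, dotProduct, mulVec]
    · have hs : 0 < ∑ i, (v i) ^ 2 := by
        obtain ⟨i, hi⟩ := Function.ne_iff.mp hv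
        exact Finset.sum_pos' (fun j _ => sq_nonneg _)
          ⟨i, Finset.mem_univ i, lt_of_le_of_ne (sq_nonneg _) (Ne.symm (pow_ne_zero 2 hi))⟩
      set s : ℝ := Real.sqrt (∑ i, (v i) ^ 2) with hsdef
      have hs0 : 0 < s := Real.sqrt_pos.mpr hs
      have hs2 : s ^ 2 = ∑ i, (v i) ^ 2 := Real.sq_sqrt hs.le
      have hu : (∑ i, ((s⁻¹ • v) i) ^ 2) = 1 := by
        simp only [Pi.smul_apply, smul_eq_mul, mul_pow, ← Finset.mul_sum]
        rw [← hs2]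
        field_simp
      have := hc (s⁻¹ • v) hu
      have hdot : (s⁻¹ • v) ⬝ᵥ M.mulVec (s⁻¹ • v) = s⁻¹ * (s⁻¹ * (v ⬝ᵥ M.mulVec v)) := by
        rw [Matrix.mulVec_smul, smul_dotProduct, dotProduct_smul]
        simp [smul_eq_mul]
      rw [hdot] at this
      have h2 : c * s ^ 2 ≤ v ⬝ᵥ M.mulVec v := by
        have := mul_le_mul_of_nonneg_left this (le_of_lt (by positivity : (0:ℝ) < s ^ 2))
        have hss : s ^ 2 * (s⁻¹ * (s⁻¹ * (v ⬝ᵥ M.mulVec v))) = v ⬝ᵥ M.mulVec v := by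
          field_simp
        linarith [this, hss.symm.le, hss.le]
      rw [← hs2]; exact h2
  -- get eigenvector
  set A' : Matrix (Fin d) (Fin d) ℂ := Abar.map (algebraMap ℝ ℂ) with hA'
  have hspec : ν ∈ spectrum ℂ (Matrix.toLinAlgEquiv' A') := by
    rwa [AlgEquiv.spectrum_eq Matrix.toLinAlgEquiv' A']
  have heig : Module.End.HasEigenvalue (Matrix.toLinAlgEquiv' A') ν :=
    Module.End.hasEigenvalue_iff_mem_spectrum.mpr hspec
  obtain ⟨w, hw⟩ := heig.exists_hasEigenvector
  have hwne : w ≠ 0 := hw.2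
  have hmv : A'.mulVec w = ν • w := by
    have := hw.apply_eq_smul
    rwa [Matrix.toLinAlgEquiv'_apply] at this
  set a : Fin d → ℝ := fun i => (w i).re with ha
  set b : Fin d → ℝ := fun i => (w i).im with hb
  set T : ℝ := ∑ i, Complex.normSq (w i) with hT
  have hTpos : 0 < T := by
    obtain ⟨i, hi⟩ := Function.ne_iff.mp hwne
    exact Finset.sum_pos' (fun j _ => Complex.normSq_nonneg _)
      ⟨i, Finset.mem_univ i, Complex.normSq_pos.mpr hi⟩
  -- two evaluations of S := ∑ i, (conj (w i) * (A'.mulVec w) i).re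
  have hS1 : ∑ i, ((starRingEnd ℂ) (w i) * (A'.mulVec w) i).re = ν.re * T := by
    rw [hmv]
    simp only [Pi.smul_apply, smul_eq_mul, hT, Finset.mul_sum]
    refine Finset.sum_congr rfl fun i _ => ?_
    rw [mul_left_comm, Complex.conj_mul']
    simp [Complex.mul_re, ← Complex.ofReal_pow, Complex.sq_norm]
  have hS2 : ∑ i, ((starRingEnd ℂ) (w i) * (A'.mulVec w) i).re
      = a ⬝ᵥ Abar.mulVec a + b ⬝ᵥ Abar.mulVec b := by
    simp only [Matrix.mulVec, dotProduct, hA', Matrix.map_apply]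
    rw [← Finset.sum_add_distrib]
    refine Finset.sum_congr rfl fun i _ => ?_
    rw [Finset.mul_sum, Complex.re_sum]
    simp only [Finset.mul_sum, ← Finset.sum_add_distrib]
    refine Finset.sum_congr rfl fun j _ => ?_
    simp only [Complex.coe_algebraMap, Complex.mul_re, Complex.mul_im, Complex.conj_re,
      Complex.conj_im, Complex.ofReal_re, Complex.ofReal_im, ha, hb]
    ring
  -- combine
  have hTsplit : T = (∑ i, (a i) ^ 2) + (∑ i, (b i) ^ 2) := by
    rw [hT, ← Finset.sum_add_distrib]
    refine Finset.sum_congr rfl fun i _ => ?_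
    simp [Complex.normSq_apply, ha, hb, sq]
  have h1γ : (0:ℝ) ≤ 1 - γ := by linarith
  have hfinal : (1 - γ) * c * T ≤ ν.re * T := by
    rw [hS1.symm, hS2]
    have haM := mul_le_mul_of_nonneg_left (hcv a) h1γ
    have hbM := mul_le_mul_of_nonneg_left (hcv b) h1γ
    have haA := hmain a
    have hbA := hmain b
    rw [hTsplit]
    nlinarith
  exact le_of_mul_le_mul_right hfinal hTpos
end

section
/- For every dimension d ≥ 2 there exists a matrix Ā ∈ ℂ^{d×d} with min_i Re(λ_i(Ā)) ≥ 0 and min_i |λ_i(Ā)| ≥ 1 such that, with θ* = 0, initial vector θ_0 = e_d (the last standard basis vector), any step size η > 0, and deterministic iterates θ_{t+1} = (I − ηĀ)θ_t, the Polyak–Ruppert average θ̄_T = (1/T)∑_{t=0}^{T−1}θ_t satisfies ‖θ̄_T − θ*‖₂ ≥ 1/2 for all T ≥ 4. In particular one may take Ā = −iI_d − J_d where J_d is the nilpotent Jordan block. -/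
open Matrix Finset


lemma Jpow_aux (d : ℕ) (k : ℕ) :
    (Matrix.of (fun i j : Fin d => if (i:ℕ)+1 = (j:ℕ) then (1:ℂ) else 0)) ^ k =
    Matrix.of (fun i j : Fin d => if (i:ℕ)+k = (j:ℕ) then (1:ℂ) else 0) := by
  induction k with
  | zero => ext i j; simp [Matrix.one_apply, Fin.ext_iff]
  | succ n ih =>
    ext i j
    rw [pow_succ, ih]
    simp only [Matrix.mul_apply, Matrix.of_apply]
    rcases Nat.lt_or_ge ((i:ℕ)+n) d with h | h
    · rw [Finset.sum_eq_single (⟨(i:ℕ)+n, h⟩ : Fin d)]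
      · simp [Nat.add_assoc]
      · intro m _ hm
        have hnm : ¬((i:ℕ)+n = (m:ℕ)) := fun hh => hm (Fin.val_injective hh.symm)
        rw [if_neg hnm, zero_mul]
      · intro hm; exact absurd (Finset.mem_univ _) hm
    · rw [Finset.sum_eq_zero, if_neg (by omega)]
      intro m _
      rw [if_neg (by omega), zero_mul]

lemma spec_aux (d : ℕ) :
    ∀ μ ∈ spectrum ℂ ((-Complex.I) • (1 : Matrix (Fin d) (Fin d) ℂ) -
      Matrix.of (fun i j : Fin d => if (i:ℕ)+1 = (j:ℕ) then (1:ℂ) else 0)),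
      μ = -Complex.I := by
  intro μ hμ
  by_contra hne
  set J := Matrix.of (fun i j : Fin d => if (i:ℕ)+1 = (j:ℕ) then (1:ℂ) else 0) with hJ
  have hnil : IsNilpotent J := by
    refine ⟨d, ?_⟩
    ext i j
    rw [Jpow_aux]
    simp only [Matrix.of_apply, Matrix.zero_apply]
    rw [if_neg (by omega)]
  rw [spectrum.mem_iff] at hμ
  apply hμ
  have hc : μ + Complex.I ≠ 0 := fun h => hne (by linear_combination h)
  have hEq : algebraMap ℂ (Matrix (Fin d) (Fin d) ℂ) μ - ((-Complex.I) • 1 - J)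
      = (μ + Complex.I) • ((1 : Matrix (Fin d) (Fin d) ℂ) + (μ + Complex.I)⁻¹ • J) := by
    rw [Algebra.algebraMap_eq_smul_one, smul_add, smul_smul, mul_inv_cancel₀ hc, one_smul]
    module
  rw [hEq, Algebra.smul_def]
  exact ((isUnit_iff_ne_zero.mpr hc).map (algebraMap ℂ (Matrix (Fin d) (Fin d) ℂ))).mul
    ((hnil.smul _).isUnit_one_add)

/-- For every `d ≥ 2` there is a matrix `Ā ∈ ℂ^{d×d}` whose eigenvalues all have
nonnegative real part and modulus at least `1`, such that for `θ* = 0`, `θ_0 = e_d`,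
any step size `η > 0` and the deterministic iterates `θ_{t+1} = (I - ηĀ)θ_t`, the
Polyak–Ruppert average stays at Euclidean distance at least `1/2` from `θ*` for all
`T ≥ 4`. -/
theorem stmt10 (d : ℕ) (hd : 2 ≤ d) :
    ∃ Abar : Matrix (Fin d) (Fin d) ℂ,
      (∀ μ ∈ spectrum ℂ Abar, 0 ≤ μ.re ∧ 1 ≤ ‖μ‖) ∧
      ∀ η : ℝ, 0 < η → ∀ θ : ℕ → Fin d → ℂ,
        θ 0 = Pi.single (⟨d - 1, by omega⟩ : Fin d) 1 →
        (∀ t, θ (t + 1) =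
          ((1 : Matrix (Fin d) (Fin d) ℂ) - (η : ℂ) • Abar).mulVec (θ t)) →
        ∀ T : ℕ, 4 ≤ T →
          (1 : ℝ) / 2 ≤ Real.sqrt (∑ j,
            ‖((T : ℂ)⁻¹ • ∑ t ∈ Finset.range T, θ t) j‖ ^ 2) := by
  classical
  set J : Matrix (Fin d) (Fin d) ℂ :=
    Matrix.of (fun i j : Fin d => if (i:ℕ)+1 = (j:ℕ) then (1:ℂ) else 0) with hJ
  refine ⟨(-Complex.I) • 1 - J, ?_, ?_⟩
  · intro μ hμ
    have := spec_aux d μ hμ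
    subst this
    refine ⟨by simp, by simp⟩
  · intro η hη θ hθ0 hrec T hT
    set z : ℂ := 1 + (η:ℂ) * Complex.I with hz
    have hjlt : d - 1 < d := by omega
    have hj2lt : d - 2 < d := by omega
    set jl : Fin d := ⟨d-1, hjlt⟩ with hjl
    set j2 : Fin d := ⟨d-2, hj2lt⟩ with hj2
    have hjlv : (jl:ℕ) = d - 1 := rfl
    have hj2v : (j2:ℕ) = d - 2 := rfl
    have hne : j2 ≠ jl := fun h => absurd (congrArg Fin.val h) (by omega)
    have hMeq : (1 : Matrix (Fin d) (Fin d) ℂ) - (η:ℂ) • ((-Complex.I) • 1 - J)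
        = z • 1 + (η:ℂ) • J := by
      rw [hz]; module
    have hJl : ∀ v : Fin d → ℂ, J.mulVec v jl = 0 := by
      intro v
      simp only [Matrix.mulVec, dotProduct, hJ, Matrix.of_apply]
      refine Finset.sum_eq_zero fun k _ => ?_
      have hk := k.isLt
      rw [if_neg (by omega), zero_mul]
    have hJ2 : ∀ v : Fin d → ℂ, J.mulVec v j2 = v jl := by
      intro v
      simp only [Matrix.mulVec, dotProduct, hJ, Matrix.of_apply]
      rw [Finset.sum_eq_single jl]
      · rw [if_pos (by omega), one_mul]
      · intro m _ hm
        rw [if_neg (fun hh => hm (Fin.val_injective (by omega))), zero_mul]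
      · intro hm; exact absurd (Finset.mem_univ _) hm
    have hMl : ∀ v : Fin d → ℂ,
        (((1 : Matrix (Fin d) (Fin d) ℂ) - (η:ℂ) • ((-Complex.I) • 1 - J)).mulVec v) jl
        = z * v jl := by
      intro v
      rw [hMeq, Matrix.add_mulVec, Matrix.smul_mulVec, Matrix.smul_mulVec,
        Matrix.one_mulVec]
      simp [hJl v]
    have hM2 : ∀ v : Fin d → ℂ,
        (((1 : Matrix (Fin d) (Fin d) ℂ) - (η:ℂ) • ((-Complex.I) • 1 - J)).mulVec v) j2
        = z * v j2 + (η:ℂ) * v jl := by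
      intro v
      rw [hMeq, Matrix.add_mulVec, Matrix.smul_mulVec, Matrix.smul_mulVec,
        Matrix.one_mulVec]
      simp [hJ2 v]
    have hlast : ∀ t, θ t jl = z ^ t := by
      intro t
      induction t with
      | zero => rw [hθ0]; simp [hjl]
      | succ n ih => rw [hrec n, hMl, ih, pow_succ]; ring
    have hsec : ∀ t, θ t j2 = (η:ℂ) * t * z ^ (t - 1) := by
      intro t
      induction t with
      | zero => rw [hθ0]; simp [Pi.single_eq_of_ne hne]
      | succ n ih =>
        rw [hrec n, hM2, ih, hlast n]
        cases n with
        | zero => simp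
        | succ m =>
          simp only [Nat.add_sub_cancel]
          push_cast
          rw [pow_succ]
          ring
    have hterm : ∀ t : ℕ, (η:ℂ) * t * z ^ (t-1) - Complex.I * z ^ t
        = (-Complex.I * ((t:ℂ)+1) * z ^ t) - (-Complex.I * t * z ^ (t-1)) := by
      intro t
      cases t with
      | zero => simp
      | succ n =>
        simp only [Nat.add_sub_cancel]
        push_cast
        rw [hz]
        linear_combination ((η:ℂ)*((n:ℂ)+1)*(1+(η:ℂ)*Complex.I)^n) * Complex.I_sq
    have htel : ∀ N : ℕ, (∑ t ∈ Finset.range N, ((η:ℂ) * t * z ^ (t-1) - Complex.I * z ^ t))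
        = -Complex.I * N * z ^ (N-1) := by
      intro N
      induction N with
      | zero => simp
      | succ n ih =>
        rw [Finset.sum_range_succ, ih, hterm n]
        simp only [Nat.add_sub_cancel]
        push_cast
        ring
    set s : Fin d → ℂ := (T:ℂ)⁻¹ • ∑ t ∈ Finset.range T, θ t with hs
    have hTne : (T:ℂ) ≠ 0 := Nat.cast_ne_zero.mpr (by omega)
    have ha : s jl = (T:ℂ)⁻¹ * ∑ t ∈ Finset.range T, z ^ t := by
      simp only [hs, Pi.smul_apply, smul_eq_mul, Finset.sum_apply]
      congr 1
      exact Finset.sum_congr rfl fun t _ => hlast t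
    have hb : s j2 = (T:ℂ)⁻¹ * ∑ t ∈ Finset.range T, (η:ℂ) * t * z ^ (t-1) := by
      simp only [hs, Pi.smul_apply, smul_eq_mul, Finset.sum_apply]
      congr 1
      exact Finset.sum_congr rfl fun t _ => hsec t
    have hkey : s j2 - Complex.I * s jl = -Complex.I * z ^ (T-1) := by
      have e1 : (∑ t ∈ Finset.range T, (η:ℂ) * t * z ^ (t-1))
          - Complex.I * (∑ t ∈ Finset.range T, z ^ t)
          = -Complex.I * T * z ^ (T-1) := by
        rw [← htel T, Finset.sum_sub_distrib, Finset.mul_sum]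
      calc s j2 - Complex.I * s jl
          = (T:ℂ)⁻¹ * ((∑ t ∈ Finset.range T, (η:ℂ) * t * z ^ (t-1))
              - Complex.I * (∑ t ∈ Finset.range T, z ^ t)) := by
            rw [ha, hb]; ring
        _ = (T:ℂ)⁻¹ * (-Complex.I * T * z ^ (T-1)) := by rw [e1]
        _ = -Complex.I * z ^ (T-1) := by
            field_simp
    have hzabs : 1 ≤ ‖z‖ := by
      have h1 := Complex.abs_re_le_norm z
      have h2 : z.re = 1 := by simp [hz]
      rw [h2] at h1
      simpa using h1
    have habs : 1 ≤ ‖s j2 - Complex.I * s jl‖ := by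
      rw [hkey]
      have : ‖-Complex.I * z ^ (T-1)‖ = ‖z‖ ^ (T-1) := by
        rw [norm_mul, norm_pow]
        simp
      rw [this]
      exact one_le_pow₀ hzabs
    have hsum1 : 1 ≤ ‖s jl‖ + ‖s j2‖ := by
      have h2 : ‖s j2 - Complex.I * s jl‖
          ≤ ‖s j2‖ + ‖Complex.I * s jl‖ := by
        exact (norm_sub_le _ _)
      rw [norm_mul] at h2
      simp only [Complex.norm_I, one_mul] at h2
      linarith
    have hquart : (1:ℝ)/4 ≤ ‖s j2‖ ^ 2 + ‖s jl‖ ^ 2 := by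
      nlinarith [sq_nonneg (‖s jl‖ - ‖s j2‖),
        norm_nonneg (s jl), norm_nonneg (s j2)]
    have hsub : ‖s j2‖ ^ 2 + ‖s jl‖ ^ 2
        ≤ ∑ j, ‖s j‖ ^ 2 := by
      have hp : ∑ j ∈ ({j2, jl} : Finset (Fin d)), ‖s j‖ ^ 2
          = ‖s j2‖ ^ 2 + ‖s jl‖ ^ 2 := Finset.sum_pair hne
      rw [← hp]
      exact Finset.sum_le_sum_of_subset_of_nonneg (Finset.subset_univ _)
        (fun i _ _ => by positivity)
    have hhalf : (1:ℝ)/2 = Real.sqrt (1/4) := by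
      rw [show (1:ℝ)/4 = (1/2)^2 by norm_num, Real.sqrt_sq (by norm_num)]
    rw [hhalf]
    exact Real.sqrt_le_sqrt (le_trans hquart hsub)
end
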